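/- Let [u,v] and [u*,v*] be nondegenerate closed intervals, and let C ⊆ [u,v] and C* ⊆ [u*,v*] be the images of the standard middle-thirds Cantor set under the increasing affine bijections [0,1] → [u,v] and [0,1] → [u*,v*] respectively. Let p₁ < p₂ be two points of C each of which is a left endpoint of a bounded connected component of [u,v] ∖ C, and let p₁* < p₂* be two points of C* each of which is a left endpoint of a bounded connected component of [u*,v*] ∖ C*. Then there exists an increasing homeomorphism f : [u,v] → [u*,v*] with f(C) = C*, f(p₁) = p₁*, and f(p₂) = p₂*. -/

import Mathlib

open Set Topology Filter

/-- The standard middle-thirds Cantor set: points of `[0,1]` admitting a ternary expansion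
using only the digits `0` and `2`. -/
def cantorC : Set ℝ :=
  {x | ∃ a : ℕ → ℕ, (∀ n, a n = 0 ∨ a n = 2) ∧ x = ∑' n, (a n : ℝ) / 3 ^ (n + 1)}

/-- The increasing affine bijection `[0,1] → [u,v]`. -/
def affineIcc (u v : ℝ) : ℝ → ℝ := fun t => u + (v - u) * t

/-- `p` is the left endpoint of a bounded connected component of `[u,v] ∖ C` (for a Cantor
set `C ⊆ [u,v]` containing `u` and `v`): `p ∈ C`, `p < v`, and `C` has a gap just to the
right of `p`. -/
def IsLeftEndpoint (C : Set ℝ) (v p : ℝ) : Prop :=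
  p ∈ C ∧ p < v ∧ ∃ ε > 0, Set.Ioo p (p + ε) ∩ C = ∅

lemma digit_le_two {a : ℕ → ℕ} (ha : ∀ n, a n = 0 ∨ a n = 2) (n : ℕ) : (a n : ℝ) ≤ 2 := by
  rcases ha n with h | h <;> simp [h]

lemma geom_aux (n : ℕ) : (2:ℝ) / 3 ^ (n+1) = (2/3) * (1/3)^n := by
  rw [pow_succ, one_div_pow]
  field_simp

lemma summable_23 : Summable (fun n : ℕ => (2:ℝ)/3^(n+1)) := by
  have : (fun n : ℕ => (2:ℝ)/3^(n+1)) = fun n => (2/3) * (1/3)^n := funext geom_aux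
  rw [this]
  exact (summable_geometric_of_lt_one (by norm_num) (by norm_num)).mul_left _

lemma digit_summable {a : ℕ → ℕ} (ha : ∀ n, a n = 0 ∨ a n = 2) :
    Summable (fun n => (a n : ℝ) / 3 ^ (n + 1)) := by
  apply Summable.of_nonneg_of_le (fun n => by positivity) (fun n => ?_) summable_23
  gcongr
  rcases ha n with h | h <;> simp [h]

lemma two_geom : ∑' n : ℕ, (2:ℝ)/3^(n+1) = 1 := by
  have : (fun n : ℕ => (2:ℝ)/3^(n+1)) = fun n => (2/3) * (1/3)^n := funext geom_aux
  rw [this, tsum_mul_left, tsum_geometric_of_lt_one (by norm_num) (by norm_num)]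
  norm_num

lemma val_mem_Icc {a : ℕ → ℕ} (ha : ∀ n, a n = 0 ∨ a n = 2) :
    (∑' n, (a n : ℝ) / 3 ^ (n + 1)) ∈ Icc (0:ℝ) 1 := by
  constructor
  · exact tsum_nonneg (fun n => by positivity)
  · calc ∑' n, (a n : ℝ) / 3 ^ (n + 1) ≤ ∑' n : ℕ, (2:ℝ)/3^(n+1) := by
          apply Summable.tsum_le_tsum (fun n => ?_) (digit_summable ha) summable_23
          gcongr
          rcases ha n with h | h <;> simp [h]
      _ = 1 := two_geom

lemma cantorC_subset_Icc : cantorC ⊆ Icc 0 1 := by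
  rintro x ⟨a, ha, rfl⟩
  exact val_mem_Icc ha

lemma zero_mem_cantorC : (0:ℝ) ∈ cantorC := by
  refine ⟨fun _ => 0, fun n => Or.inl rfl, ?_⟩
  simp

lemma one_mem_cantorC : (1:ℝ) ∈ cantorC := by
  refine ⟨fun _ => 2, fun n => Or.inr rfl, ?_⟩
  rw [← two_geom]
  norm_num

lemma val_step {a : ℕ → ℕ} (ha : ∀ n, a n = 0 ∨ a n = 2) :
    ∑' n, (a n : ℝ) / 3 ^ (n + 1) = (a 0) / 3 + (∑' n, (a (n+1) : ℝ) / 3 ^ (n + 1)) / 3 := by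
  rw [Summable.tsum_eq_zero_add (digit_summable ha)]
  congr 1
  · norm_num
  · have h : (fun n : ℕ => (a (n+1) : ℝ)/3^(n+1+1)) = fun n => (a (n+1) : ℝ)/3^(n+1) * (3:ℝ)⁻¹ := by
      funext n
      rw [pow_succ]
      ring
    rw [h, tsum_mul_right]
    ring

lemma mem_cons {y : ℝ} (d : ℕ) (hd : d = 0 ∨ d = 2) (hy : y ∈ cantorC) :
    ((d:ℝ) + y)/3 ∈ cantorC := by
  obtain ⟨a, ha, rfl⟩ := hy
  refine ⟨fun n => Nat.rec d (fun k _ => a k) n, fun n => ?_, ?_⟩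
  · cases n with
    | zero => exact hd
    | succ n => exact ha n
  · rw [val_step (a := fun n => Nat.rec d (fun k _ => a k) n)
      (fun n => by cases n with | zero => exact hd | succ n => exact ha n)]
    show ((d:ℝ) + ∑' (n : ℕ), ((a n:ℝ)) / 3 ^ (n + 1)) / 3
      = (d:ℝ) / 3 + (∑' (n : ℕ), ((a n:ℝ)) / 3 ^ (n + 1)) / 3
    ring

lemma mem_cases {x : ℝ} (hx : x ∈ cantorC) :
    (∃ y ∈ cantorC, x = ((0:ℝ) + y)/3) ∨ (∃ y ∈ cantorC, x = ((2:ℝ) + y)/3) := by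
  obtain ⟨a, ha, rfl⟩ := hx
  have hy : (∑' n, (a (n+1) : ℝ) / 3 ^ (n + 1)) ∈ cantorC := ⟨fun n => a (n+1), fun n => ha (n+1), rfl⟩
  rcases ha 0 with h0 | h0
  · left
    exact ⟨_, hy, by rw [val_step ha, h0]; push_cast; ring⟩
  · right
    exact ⟨_, hy, by rw [val_step ha, h0]; push_cast; ring⟩
def IsPieceP (c : ℝ) (k : ℕ) : Prop :=
  cantorC ∩ Icc c (c + (3:ℝ)⁻¹^k) = (fun x => c + (3:ℝ)⁻¹^k * x) '' cantorC

lemma pieceP_mem {c : ℝ} {k : ℕ} (h : IsPieceP c k) :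
    c ∈ cantorC ∧ c + (3:ℝ)⁻¹^k ∈ cantorC := by
  constructor
  · have : c ∈ (fun x => c + (3:ℝ)⁻¹^k * x) '' cantorC := ⟨0, zero_mem_cantorC, by simp⟩
    rw [← h] at this
    exact this.1
  · have : c + (3:ℝ)⁻¹^k ∈ (fun x => c + (3:ℝ)⁻¹^k * x) '' cantorC :=
      ⟨1, one_mem_cantorC, by simp⟩
    rw [← h] at this
    exact this.1

lemma pieceP_zero : IsPieceP 0 0 := by
  unfold IsPieceP
  have h1 : ((fun x : ℝ => 0 + (3:ℝ)⁻¹^0 * x) '' cantorC) = cantorC := by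
    have : (fun x : ℝ => 0 + (3:ℝ)⁻¹^0 * x) = id := by funext x; simp
    rw [this, image_id]
  rw [h1]
  have : (0:ℝ) + (3:ℝ)⁻¹^0 = 1 := by norm_num
  rw [this]
  exact inter_eq_left.mpr cantorC_subset_Icc

lemma pieceP_left : IsPieceP 0 1 := by
  unfold IsPieceP
  ext x
  simp only [mem_inter_iff, mem_Icc, mem_image, pow_one]
  constructor
  · rintro ⟨hx, h0, h1⟩
    rcases mem_cases hx with ⟨y, hy, rfl⟩ | ⟨y, hy, rfl⟩
    · exact ⟨y, hy, by ring⟩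
    · have := (cantorC_subset_Icc hy).1
      exfalso
      rw [inv_eq_one_div] at h1
      linarith
  · rintro ⟨y, hy, rfl⟩
    obtain ⟨hy0, hy1⟩ := cantorC_subset_Icc hy
    have hmem : ((0:ℝ) + y)/3 ∈ cantorC := by exact_mod_cast mem_cons 0 (Or.inl rfl) hy
    norm_num at hmem ⊢
    refine ⟨by convert hmem using 1; ring, by positivity, by linarith⟩

lemma pieceP_right : IsPieceP (2/3) 1 := by
  unfold IsPieceP
  ext x
  simp only [mem_inter_iff, mem_Icc, mem_image, pow_one]
  constructor
  · rintro ⟨hx, h0, h1⟩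
    rcases mem_cases hx with ⟨y, hy, rfl⟩ | ⟨y, hy, rfl⟩
    · have := (cantorC_subset_Icc hy).2
      exfalso
      linarith
    · exact ⟨y, hy, by ring⟩
  · rintro ⟨y, hy, rfl⟩
    obtain ⟨hy0, hy1⟩ := cantorC_subset_Icc hy
    have hmem : ((2:ℝ) + y)/3 ∈ cantorC := by exact_mod_cast mem_cons 2 (Or.inr rfl) hy
    refine ⟨by convert hmem using 1; push_cast; ring, by linarith, ?_⟩
    rw [inv_eq_one_div]
    linarith

lemma gap_base : cantorC ∩ Ioo ((3:ℝ)⁻¹) (2/3) = ∅ := by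
  ext x
  simp only [mem_inter_iff, mem_Ioo, mem_empty_iff_false, iff_false, not_and]
  intro hx h1 h2
  rcases mem_cases hx with ⟨y, hy, rfl⟩ | ⟨y, hy, rfl⟩
  · have := (cantorC_subset_Icc hy).2
    rw [inv_eq_one_div] at h1
    linarith
  · have := (cantorC_subset_Icc hy).1
    linarith

lemma pieceP_trans {c d : ℝ} {k m : ℕ} (h1 : IsPieceP c k) (h2 : IsPieceP d m) :
    IsPieceP (c + (3:ℝ)⁻¹^k * d) (k + m) := by
  have hd0 : 0 ≤ d := (cantorC_subset_Icc (pieceP_mem h2).1).1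
  have hd1 : d + (3:ℝ)⁻¹^m ≤ 1 := (cantorC_subset_Icc (pieceP_mem h2).2).2
  have hk : (0:ℝ) < (3:ℝ)⁻¹^k := by positivity
  have hm : (0:ℝ) < (3:ℝ)⁻¹^m := by positivity
  have hpow : (3:ℝ)⁻¹^(k+m) = (3:ℝ)⁻¹^k * (3:ℝ)⁻¹^m := pow_add _ _ _
  unfold IsPieceP
  ext x
  simp only [mem_inter_iff, mem_Icc, mem_image]
  constructor
  · rintro ⟨hx, hlo, hhi⟩
    rw [hpow] at hhi
    have hx1 : x ∈ cantorC ∩ Icc c (c + (3:ℝ)⁻¹^k) := by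
      refine ⟨hx, by nlinarith, by nlinarith⟩
    rw [h1] at hx1
    obtain ⟨t, ht, rfl⟩ := hx1
    simp only at hlo hhi ⊢
    have htd : t ∈ Icc d (d + (3:ℝ)⁻¹^m) := by
      constructor
      · exact le_of_mul_le_mul_left (by linarith) hk
      · exact le_of_mul_le_mul_left (by nlinarith) hk
    have ht2 : t ∈ (fun x => d + (3:ℝ)⁻¹^m * x) '' cantorC := by
      rw [← h2]; exact ⟨ht, htd⟩
    obtain ⟨s, hs, rfl⟩ := ht2
    exact ⟨s, hs, by rw [hpow]; ring⟩
  · rintro ⟨s, hs, rfl⟩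
    obtain ⟨hs0, hs1⟩ := cantorC_subset_Icc hs
    have ht : d + (3:ℝ)⁻¹^m * s ∈ cantorC ∩ Icc d (d + (3:ℝ)⁻¹^m) := by
      rw [h2]; exact ⟨s, hs, rfl⟩
    have hx : c + (3:ℝ)⁻¹^k * (d + (3:ℝ)⁻¹^m * s) ∈ cantorC ∩ Icc c (c + (3:ℝ)⁻¹^k) := by
      rw [h1]; exact ⟨_, ht.1, rfl⟩
    have hxeq : c + (3:ℝ)⁻¹^k * d + (3:ℝ)⁻¹^(k+m) * s = c + (3:ℝ)⁻¹^k * (d + (3:ℝ)⁻¹^m * s) := by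
      rw [hpow]; ring
    have hb1 : 0 ≤ (3:ℝ)⁻¹^(k+m) * s := mul_nonneg (by positivity) hs0
    have hb2 : (3:ℝ)⁻¹^(k+m) * s ≤ (3:ℝ)⁻¹^(k+m) := by
      nth_rewrite 2 [← mul_one ((3:ℝ)⁻¹^(k+m))]
      exact mul_le_mul_of_nonneg_left hs1 (by positivity)
    refine ⟨?_, by linarith, by linarith⟩
    rw [hxeq]
    exact hx.1

lemma gap_transport {c : ℝ} {k : ℕ} (h : IsPieceP c k) {r s : ℝ} (hr : 0 ≤ r) (hs : s ≤ 1)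
    (hgap : cantorC ∩ Ioo r s = ∅) :
    cantorC ∩ Ioo (c + (3:ℝ)⁻¹^k * r) (c + (3:ℝ)⁻¹^k * s) = ∅ := by
  have hk : (0:ℝ) < (3:ℝ)⁻¹^k := by positivity
  ext x
  simp only [mem_inter_iff, mem_Ioo, mem_empty_iff_false, iff_false, not_and]
  intro hx h1 h2
  have hx1 : x ∈ cantorC ∩ Icc c (c + (3:ℝ)⁻¹^k) := by
    refine ⟨hx, by nlinarith, by nlinarith⟩
  rw [h] at hx1
  obtain ⟨t, ht, rfl⟩ := hx1
  have h1' : r < t := lt_of_mul_lt_mul_left (by linarith) hk.le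
  have h2' : t < s := lt_of_mul_lt_mul_left (by linarith) hk.le
  have : t ∈ cantorC ∩ Ioo r s := ⟨ht, h1', h2'⟩
  rw [hgap] at this
  exact this
inductive ChainRel : ℝ → List (ℝ × ℕ) → ℝ → Prop
  | single (c : ℝ) (k : ℕ) : IsPieceP c k → ChainRel c [(c,k)] (c + (3:ℝ)⁻¹^k)
  | cons (c : ℝ) (k : ℕ) {a₂ b : ℝ} {l : List (ℝ × ℕ)} :
      IsPieceP c k → c + (3:ℝ)⁻¹^k < a₂ → cantorC ∩ Ioo (c + (3:ℝ)⁻¹^k) a₂ = ∅ →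
      ChainRel a₂ l b → ChainRel c ((c,k) :: l) b

lemma chain_ne_nil {a b : ℝ} {l : List (ℝ × ℕ)} (h : ChainRel a l b) : l ≠ [] := by
  cases h <;> simp

lemma chain_mem {a b : ℝ} {l : List (ℝ × ℕ)} (h : ChainRel a l b) :
    a ∈ cantorC ∧ b ∈ cantorC ∧ a ≤ b := by
  induction h with
  | single c k hp =>
    exact ⟨(pieceP_mem hp).1, (pieceP_mem hp).2, le_add_of_nonneg_right (by positivity)⟩
  | cons c k hp hlt hgap h ih =>
    have h3 : (0:ℝ) < (3:ℝ)⁻¹^k := by positivity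
    exact ⟨(pieceP_mem hp).1, ih.2.1, by linarith [ih.2.2]⟩

lemma chain_transport {c : ℝ} {k : ℕ} (hp : IsPieceP c k) {a b : ℝ} {l : List (ℝ × ℕ)}
    (h : ChainRel a l b) :
    ChainRel (c + (3:ℝ)⁻¹^k * a) (l.map (fun q => (c + (3:ℝ)⁻¹^k * q.1, k + q.2)))
      (c + (3:ℝ)⁻¹^k * b) := by
  induction h with
  | single c' k' hp' =>
    have := ChainRel.single _ _ (pieceP_trans hp hp')
    have he : c + (3:ℝ)⁻¹^k * c' + (3:ℝ)⁻¹^(k+k') = c + (3:ℝ)⁻¹^k * (c' + (3:ℝ)⁻¹^k') := by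
      rw [pow_add]; ring
    rw [he] at this
    exact this
  | @cons c' k' a₂ b' l' hp' hlt hgap h ih =>
    have hk : (0:ℝ) < (3:ℝ)⁻¹^k := by positivity
    refine ChainRel.cons _ _ ?_ ?_ ?_ ih
    · exact pieceP_trans hp hp'
    · have he : c + (3:ℝ)⁻¹^k * c' + (3:ℝ)⁻¹^(k+k') = c + (3:ℝ)⁻¹^k * (c' + (3:ℝ)⁻¹^k') := by
        rw [pow_add]; ring
      rw [he]
      have := mul_lt_mul_of_pos_left hlt hk
      linarith
    · have he : c + (3:ℝ)⁻¹^k * c' + (3:ℝ)⁻¹^(k+k') = c + (3:ℝ)⁻¹^k * (c' + (3:ℝ)⁻¹^k') := by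
        rw [pow_add]; ring
      rw [he]
      have hr0 : (0:ℝ) ≤ c' + (3:ℝ)⁻¹^k' := (cantorC_subset_Icc (pieceP_mem hp').2).1
      have hs1 : a₂ ≤ 1 := (cantorC_subset_Icc (chain_mem h).1).2
      exact gap_transport hp hr0 hs1 hgap

lemma chain_append {a b a₂ c : ℝ} {l l₂ : List (ℝ × ℕ)} (h : ChainRel a l b)
    (hlt : b < a₂) (hgap : cantorC ∩ Ioo b a₂ = ∅) (h₂ : ChainRel a₂ l₂ c) :
    ChainRel a (l ++ l₂) c := by
  induction h with
  | single c' k' hp' => exact ChainRel.cons _ _ hp' hlt hgap h₂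
  | cons c' k' hp' hlt' hgap' h ih => exact ChainRel.cons _ _ hp' hlt' hgap' (ih hlt hgap)

lemma chain_split {a b : ℝ} {l : List (ℝ × ℕ)} (h : ChainRel a l b) :
    ∃ l', l'.length = l.length + 1 ∧ ChainRel a l' b := by
  have key : ∀ (c : ℝ) (k : ℕ), IsPieceP c k →
      ChainRel c [(c, k+1), (c + (3:ℝ)⁻¹^k * (2/3), k+1)] (c + (3:ℝ)⁻¹^k) := by
    intro c k hp
    have hk : (0:ℝ) < (3:ℝ)⁻¹^k := by positivity
    have hL : IsPieceP c (k+1) := by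
      have := pieceP_trans hp pieceP_left
      simpa using this
    have hR : IsPieceP (c + (3:ℝ)⁻¹^k * (2/3)) (k+1) := pieceP_trans hp pieceP_right
    have hpow : (3:ℝ)⁻¹^(k+1) = (3:ℝ)⁻¹^k * (3:ℝ)⁻¹ := pow_succ _ _
    have hgap : cantorC ∩ Ioo (c + (3:ℝ)⁻¹^(k+1)) (c + (3:ℝ)⁻¹^k * (2/3)) = ∅ := by
      have := gap_transport hp (by norm_num : (0:ℝ) ≤ (3:ℝ)⁻¹) (by norm_num : (2/3:ℝ) ≤ 1) gap_base
      have he : c + (3:ℝ)⁻¹^k * (3:ℝ)⁻¹ = c + (3:ℝ)⁻¹^(k+1) := by rw [hpow]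
      rw [he] at this
      exact this
    have hend : c + (3:ℝ)⁻¹^k * (2/3) + (3:ℝ)⁻¹^(k+1) = c + (3:ℝ)⁻¹^k := by
      rw [hpow]; ring
    have hlast := ChainRel.single _ _ hR
    rw [hend] at hlast
    refine ChainRel.cons _ _ hL ?_ hgap hlast
    rw [hpow]
    nlinarith
  cases h with
  | single c k hp =>
    exact ⟨[(a, k+1), (a + (3:ℝ)⁻¹^k * (2/3), k+1)], by simp, key a k hp⟩
  | cons c k hp hlt hgap h2 =>
    rename_i a₂ l2
    refine ⟨(a, k+1) :: (a + (3:ℝ)⁻¹^k * (2/3), k+1) :: l2, by simp, ?_⟩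
    have := chain_append (key a k hp) hlt hgap h2
    simpa using this

lemma chain_extend {a b : ℝ} {l : List (ℝ × ℕ)} (h : ChainRel a l b) (m : ℕ) :
    ∃ l', l'.length = l.length + m ∧ ChainRel a l' b := by
  induction m with
  | zero => exact ⟨l, rfl, h⟩
  | succ n ih =>
    obtain ⟨l', hlen, h'⟩ := ih
    obtain ⟨l'', hlen'', h''⟩ := chain_split h'
    exact ⟨l'', by omega, h''⟩
def MapsSeg (f : ℝ → ℝ) (a b a' b' : ℝ) : Prop :=
  f a = a' ∧ f b = b' ∧ f '' (cantorC ∩ Icc a b) = cantorC ∩ Icc a' b'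

lemma affine_exists (a b a' b' : ℝ) (hab : a < b) (hab' : a' < b') :
    ∃ f : ℝ → ℝ, Continuous f ∧ StrictMono f ∧ f a = a' ∧ f b = b' ∧
      ∀ x, f x = a' + (b'-a')/(b-a) * (x - a) := by
  refine ⟨fun x => a' + (b'-a')/(b-a) * (x - a), by continuity, ?_, by simp, ?_, fun x => rfl⟩
  · intro x y hxy
    have h1 : (0:ℝ) < (b'-a')/(b-a) := by
      apply div_pos <;> linarith
    simp only
    nlinarith
  · have hba : b - a ≠ 0 := by linarith
    field_simp
    ring

lemma glue_exists {f₁ f₂ : ℝ → ℝ} (t : ℝ) (h₁c : Continuous f₁) (h₂c : Continuous f₂)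
    (h₁m : StrictMono f₁) (h₂m : StrictMono f₂) (ht : f₁ t = f₂ t) :
    ∃ g : ℝ → ℝ, Continuous g ∧ StrictMono g ∧ (∀ x, x ≤ t → g x = f₁ x) ∧
      (∀ x, t ≤ x → g x = f₂ x) := by
  classical
  refine ⟨fun x => if x ≤ t then f₁ x else f₂ x, ?_, ?_, ?_, ?_⟩
  · apply Continuous.if_le h₁c h₂c continuous_id continuous_const
    intro x hx
    have hx' : x = t := hx
    rw [hx']
    exact ht
  · intro x y hxy
    by_cases hx : x ≤ t <;> by_cases hy : y ≤ t <;> simp only [hx, hy, if_pos, if_neg, if_true, if_false]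
    · exact h₁m hxy
    · calc f₁ x ≤ f₁ t := h₁m.le_iff_le.mpr hx
        _ = f₂ t := ht
        _ < f₂ y := h₂m (lt_of_not_ge hy)
    · exact absurd (hxy.le.trans hy) hx
    · exact h₂m hxy
  · intro x hx; simp [hx]
  · intro x hx
    by_cases hxt : x ≤ t
    · have : x = t := le_antisymm hxt hx
      subst this
      simp [ht]
    · simp [hxt]

lemma image_eq_of_eqOn {g f : ℝ → ℝ} {s : Set ℝ} (h : ∀ x ∈ s, g x = f x) (A : Set ℝ) :
    g '' (A ∩ s) = f '' (A ∩ s) :=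
  Set.image_congr (fun x hx => h x hx.2)

lemma glue_seg {f₁ f₂ : ℝ → ℝ} {a m b a' m' b' : ℝ}
    (h₁c : Continuous f₁) (h₁m : StrictMono f₁) (h₂c : Continuous f₂) (h₂m : StrictMono f₂)
    (ham : a ≤ m) (hmb : m ≤ b) (ham' : a' ≤ m') (hmb' : m' ≤ b')
    (hs₁ : MapsSeg f₁ a m a' m') (hs₂ : MapsSeg f₂ m b m' b') :
    ∃ g : ℝ → ℝ, Continuous g ∧ StrictMono g ∧ (∀ x, x ≤ m → g x = f₁ x) ∧
      (∀ x, m ≤ x → g x = f₂ x) ∧ MapsSeg g a b a' b' := by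
  obtain ⟨hf₁a, hf₁m, hf₁i⟩ := hs₁
  obtain ⟨hf₂m, hf₂b, hf₂i⟩ := hs₂
  obtain ⟨g, hgc, hgm, hg₁, hg₂⟩ := glue_exists m h₁c h₂c h₁m h₂m (by rw [hf₁m, hf₂m])
  refine ⟨g, hgc, hgm, hg₁, hg₂, ?_, ?_, ?_⟩
  · rw [hg₁ a ham, hf₁a]
  · rw [hg₂ b hmb, hf₂b]
  · have hsplit : cantorC ∩ Icc a b = (cantorC ∩ Icc a m) ∪ (cantorC ∩ Icc m b) := by
      rw [← inter_union_distrib_left, Icc_union_Icc_eq_Icc ham hmb]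
    have hsplit' : cantorC ∩ Icc a' b' = (cantorC ∩ Icc a' m') ∪ (cantorC ∩ Icc m' b') := by
      rw [← inter_union_distrib_left, Icc_union_Icc_eq_Icc ham' hmb']
    rw [hsplit, hsplit', image_union]
    congr 1
    · rw [← hf₁i]
      exact image_eq_of_eqOn (fun x hx => hg₁ x hx.2) cantorC
    · rw [← hf₂i]
      exact image_eq_of_eqOn (fun x hx => hg₂ x hx.1) cantorC

lemma piece_seg {c c' : ℝ} {k k' : ℕ} (hp : IsPieceP c k) (hp' : IsPieceP c' k') :
    ∃ f : ℝ → ℝ, Continuous f ∧ StrictMono f ∧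
      MapsSeg f c (c + (3:ℝ)⁻¹^k) c' (c' + (3:ℝ)⁻¹^k') := by
  have hw : (0:ℝ) < (3:ℝ)⁻¹^k := by positivity
  have hw' : (0:ℝ) < (3:ℝ)⁻¹^k' := by positivity
  obtain ⟨f, hc, hm, hfa, hfb, hfx⟩ := affine_exists c (c + (3:ℝ)⁻¹^k) c' (c' + (3:ℝ)⁻¹^k')
    (by linarith) (by linarith)
  refine ⟨f, hc, hm, hfa, hfb, ?_⟩
  rw [hp, hp', ← image_comp]
  apply Set.image_congr
  intro x _
  simp only [Function.comp_apply]
  rw [hfx]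
  have h5 : c + (3:ℝ)⁻¹^k - c = (3:ℝ)⁻¹^k := by ring
  have h6 : c' + (3:ℝ)⁻¹^k' - c' = (3:ℝ)⁻¹^k' := by ring
  have h3 : c + (3:ℝ)⁻¹^k * x - c = (3:ℝ)⁻¹^k * x := by ring
  rw [h5, h6, h3]
  have h : ((3:ℝ)⁻¹^k) ≠ 0 := by positivity
  field_simp

lemma gap_seg {r s r' s' : ℝ} (hr : r ∈ cantorC) (hs : s ∈ cantorC) (hr' : r' ∈ cantorC)
    (hs' : s' ∈ cantorC) (hrs : r < s) (hrs' : r' < s')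
    (hgap : cantorC ∩ Ioo r s = ∅) (hgap' : cantorC ∩ Ioo r' s' = ∅) :
    ∃ f : ℝ → ℝ, Continuous f ∧ StrictMono f ∧ MapsSeg f r s r' s' := by
  obtain ⟨f, hc, hm, hfa, hfb, hfx⟩ := affine_exists r s r' s' hrs hrs'
  refine ⟨f, hc, hm, hfa, hfb, ?_⟩
  have h1 : cantorC ∩ Icc r s = {r, s} := by
    apply Subset.antisymm
    · rintro x ⟨hx, hx1, hx2⟩
      rcases eq_or_lt_of_le hx1 with h | h
      · exact Or.inl h.symm
      rcases eq_or_lt_of_le hx2 with h' | h'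
      · exact Or.inr h'
      exfalso
      have : x ∈ cantorC ∩ Ioo r s := ⟨hx, h, h'⟩
      rw [hgap] at this
      exact this
    · rintro x (rfl | rfl)
      · exact ⟨hr, le_refl _, hrs.le⟩
      · exact ⟨hs, hrs.le, le_refl _⟩
  have h2 : cantorC ∩ Icc r' s' = {r', s'} := by
    apply Subset.antisymm
    · rintro x ⟨hx, hx1, hx2⟩
      rcases eq_or_lt_of_le hx1 with h | h
      · exact Or.inl h.symm
      rcases eq_or_lt_of_le hx2 with h' | h'
      · exact Or.inr h'
      exfalso
      have : x ∈ cantorC ∩ Ioo r' s' := ⟨hx, h, h'⟩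
      rw [hgap'] at this
      exact this
    · rintro x (rfl | rfl)
      · exact ⟨hr', le_refl _, hrs'.le⟩
      · exact ⟨hs', hrs'.le, le_refl _⟩
  rw [h1, h2, image_pair, hfa, hfb]
lemma chains_map {l : List (ℝ × ℕ)} {a b : ℝ} (h1 : ChainRel a l b) :
    ∀ {l' : List (ℝ × ℕ)} {a' b' : ℝ}, ChainRel a' l' b' → l.length = l'.length →
    ∃ f : ℝ → ℝ, Continuous f ∧ StrictMono f ∧ MapsSeg f a b a' b' := by
  induction h1 with
  | single c k hp =>
    intro l' a' b' h2 hlen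
    cases h2 with
    | single c' k' hp' =>
      obtain ⟨f, hc, hm, hs⟩ := piece_seg hp hp'
      exact ⟨f, hc, hm, hs⟩
    | @cons c' k' a₂' b2' l₂' hp' hlt' hgap' h2' =>
      exfalso
      have := chain_ne_nil h2'
      simp at hlen
      exact this hlen.symm.symm
  | @cons c k a₂ b2 ltail hp hlt hgap htail ih =>
    intro l' a' b' h2 hlen
    cases h2 with
    | single c' k' hp' =>
      exfalso
      have := chain_ne_nil htail
      simp at hlen
      exact this hlen
    | @cons c' k' a₂' b2' l₂' hp' hlt' hgap' h2' =>
      obtain ⟨f₃, h₃c, h₃m, h₃s⟩ := ih h2' (by simpa using hlen)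
      obtain ⟨f₁, h₁c, h₁m, h₁s⟩ := piece_seg hp hp'
      obtain ⟨f₂, h₂c, h₂m, h₂s⟩ := gap_seg (pieceP_mem hp).2 (chain_mem htail).1
        (pieceP_mem hp').2 (chain_mem h2').1 hlt hlt' hgap hgap'
      obtain ⟨g, hgc, hgm, _, _, hgs⟩ := glue_seg h₂c h₂m h₃c h₃m hlt.le
        (chain_mem htail).2.2 hlt'.le (chain_mem h2').2.2 h₂s h₃s
      have hck : c ≤ c + (3:ℝ)⁻¹^k := le_add_of_nonneg_right (by positivity)
      have hck' : a' ≤ a' + (3:ℝ)⁻¹^k' := le_add_of_nonneg_right (by positivity)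
      obtain ⟨G, hGc, hGm, _, _, hGs⟩ := glue_seg h₁c h₁m hgc hgm hck
        (le_trans hlt.le (chain_mem htail).2.2) hck'
        (le_trans hlt'.le (chain_mem h2').2.2) h₁s hgs
      exact ⟨G, hGc, hGm, hGs⟩
noncomputable def Rval : List ℕ → ℝ
  | [] => 1
  | d :: w => ((d : ℝ) + Rval w)/3

@[simp] lemma Rval_nil : Rval [] = 1 := rfl
@[simp] lemma Rval_cons (d : ℕ) (w : List ℕ) : Rval (d :: w) = ((d : ℝ) + Rval w)/3 := rfl

lemma Rval_pos (w : List ℕ) : 0 < Rval w := by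
  induction w with
  | nil => norm_num
  | cons d w ih => simp only [Rval_cons]; positivity

lemma Rval_le_one {w : List ℕ} (hw : ∀ d ∈ w, d = 0 ∨ d = 2) : Rval w ≤ 1 := by
  induction w with
  | nil => norm_num
  | cons d w ih =>
    have hd : (d:ℝ) ≤ 2 := by rcases hw d (by simp) with h | h <;> simp [h]
    have := ih (fun e he => hw e (by simp [he]))
    simp only [Rval_cons]
    linarith

lemma ChainRel_congr {a b a2 b2 : ℝ} {l : List (ℝ × ℕ)} (h : ChainRel a l b)
    (ha : a = a2) (hb : b = b2) : ChainRel a2 l b2 := ha ▸ hb ▸ h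

lemma transport_left {a b : ℝ} {l : List (ℝ × ℕ)} (h : ChainRel a l b) :
    ∃ l', ChainRel (a/3) l' (b/3) :=
  ⟨_, ChainRel_congr (chain_transport pieceP_left h) (by rw [pow_one]; ring)
    (by rw [pow_one]; ring)⟩

lemma transport_right {a b : ℝ} {l : List (ℝ × ℕ)} (h : ChainRel a l b) :
    ∃ l', ChainRel ((2+a)/3) l' ((2+b)/3) :=
  ⟨_, ChainRel_congr (chain_transport pieceP_right h) (by rw [pow_one]; ring)
    (by rw [pow_one]; ring)⟩

lemma gapt_left {r s : ℝ} (hr : 0 ≤ r) (hs : s ≤ 1) (h : cantorC ∩ Ioo r s = ∅) :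
    cantorC ∩ Ioo (r/3) (s/3) = ∅ := by
  have h2 := gap_transport pieceP_left hr hs h
  have e1 : (0:ℝ) + (3:ℝ)⁻¹^1 * r = r/3 := by rw [pow_one]; ring
  have e2 : (0:ℝ) + (3:ℝ)⁻¹^1 * s = s/3 := by rw [pow_one]; ring
  rw [e1, e2] at h2
  exact h2

lemma gapt_right {r s : ℝ} (hr : 0 ≤ r) (hs : s ≤ 1) (h : cantorC ∩ Ioo r s = ∅) :
    cantorC ∩ Ioo ((2+r)/3) ((2+s)/3) = ∅ := by
  have h2 := gap_transport pieceP_right hr hs h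
  have e1 : (2:ℝ)/3 + (3:ℝ)⁻¹^1 * r = (2+r)/3 := by rw [pow_one]; ring
  have e2 : (2:ℝ)/3 + (3:ℝ)⁻¹^1 * s = (2+s)/3 := by rw [pow_one]; ring
  rw [e1, e2] at h2
  exact h2

lemma single_left : ChainRel 0 [((0:ℝ),1)] (3⁻¹ : ℝ) :=
  ChainRel_congr (ChainRel.single 0 1 pieceP_left) rfl (by norm_num)

lemma single_right : ChainRel (2/3) [((2/3:ℝ),1)] 1 :=
  ChainRel_congr (ChainRel.single (2/3) 1 pieceP_right) rfl (by norm_num)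

lemma chain_end_le_one {a b : ℝ} {l : List (ℝ × ℕ)} (h : ChainRel a l b) : b ≤ 1 :=
  (cantorC_subset_Icc (chain_mem h).2.1).2

lemma chain_start_mem01 {a b : ℝ} {l : List (ℝ × ℕ)} (h : ChainRel a l b) :
    0 ≤ a ∧ a ≤ 1 := cantorC_subset_Icc (chain_mem h).1

lemma head_tail {w : List ℕ} (hw : ∀ d ∈ w, d = 0 ∨ d = 2) :
    (∃ l, ChainRel 0 l (Rval w)) ∧
    (Rval w < 1 → ∃ a l, Rval w < a ∧ cantorC ∩ Ioo (Rval w) a = ∅ ∧ ChainRel a l 1) := by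
  induction w with
  | nil =>
    constructor
    · exact ⟨[(0,0)], ChainRel_congr (ChainRel.single 0 0 pieceP_zero) rfl (by norm_num)⟩
    · intro h
      norm_num at h
  | cons d w' ih =>
    have hd : d = 0 ∨ d = 2 := hw d (by simp)
    have hw' : ∀ e ∈ w', e = 0 ∨ e = 2 := fun e he => hw e (by simp [he])
    obtain ⟨ihH, ihT⟩ := ih hw'
    have hple : Rval w' ≤ 1 := Rval_le_one hw'
    have hppos : 0 < Rval w' := Rval_pos w'
    rcases hd with hd | hd
    · subst hd
      have hval : Rval (0 :: w') = Rval w' / 3 := by simp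
      constructor
      · obtain ⟨l, hl⟩ := ihH
        obtain ⟨l', hl'⟩ := transport_left hl
        exact ⟨l', ChainRel_congr hl' (by norm_num) hval.symm⟩
      · intro _
        by_cases hp1 : Rval w' = 1
        · refine ⟨2/3, [((2/3:ℝ),1)], ?_, ?_, single_right⟩
          · rw [hval, hp1]; norm_num
          · have : Rval (0 :: w') = (3⁻¹:ℝ) := by rw [hval, hp1]; norm_num
            rw [this]
            exact gap_base
        · have hlt1 : Rval w' < 1 := lt_of_le_of_ne hple hp1
          obtain ⟨aa, ll, haa, hgpx, hchain⟩ := ihT hlt1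
          have haa1 : aa ≤ 1 := (chain_start_mem01 hchain).2
          obtain ⟨l₁, hl₁⟩ := transport_left hchain
          have hl₁' : ChainRel (aa/3) l₁ (3⁻¹:ℝ) := ChainRel_congr hl₁ rfl (by norm_num)
          refine ⟨aa/3, l₁ ++ [((2/3:ℝ),1)], ?_, ?_, ?_⟩
          · rw [hval]; linarith
          · rw [hval]
            exact gapt_left hppos.le haa1 hgpx
          · exact chain_append hl₁' (by norm_num) gap_base single_right
    · subst hd
      have hval : Rval (2 :: w') = (2 + Rval w') / 3 := by push_cast [Rval_cons]; ring
      constructor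
      · obtain ⟨l, hl⟩ := ihH
        obtain ⟨l', hl'⟩ := transport_right hl
        have hl'' : ChainRel (2/3) l' (Rval (2 :: w')) :=
          ChainRel_congr hl' (by norm_num) (by rw [hval])
        exact ⟨_, chain_append single_left (by norm_num) gap_base hl''⟩
      · intro hlt
        have hlt1 : Rval w' < 1 := by rw [hval] at hlt; linarith
        obtain ⟨aa, ll, haa, hgpx, hchain⟩ := ihT hlt1
        have haa1 : aa ≤ 1 := (chain_start_mem01 hchain).2
        obtain ⟨l₁, hl₁⟩ := transport_right hchain
        have hl₁' : ChainRel ((2+aa)/3) l₁ 1 := ChainRel_congr hl₁ rfl (by norm_num)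
        refine ⟨(2+aa)/3, l₁, ?_, ?_, hl₁'⟩
        · rw [hval]; linarith
        · rw [hval]
          exact gapt_right hppos.le haa1 hgpx
lemma mid_chain {w₁ : List ℕ} : ∀ {w₂ : List ℕ}, (∀ d ∈ w₁, d = 0 ∨ d = 2) →
    (∀ d ∈ w₂, d = 0 ∨ d = 2) → Rval w₁ < Rval w₂ →
    ∃ a l, Rval w₁ < a ∧ cantorC ∩ Ioo (Rval w₁) a = ∅ ∧ ChainRel a l (Rval w₂) := by
  induction w₁ with
  | nil =>
    intro w₂ _ hw₂ hlt
    exact absurd hlt (by simpa using Rval_le_one hw₂)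
  | cons d₁ w₁' ih =>
    intro w₂ hw₁ hw₂ hlt
    have hd₁ : d₁ = 0 ∨ d₁ = 2 := hw₁ d₁ (by simp)
    have hw₁' : ∀ e ∈ w₁', e = 0 ∨ e = 2 := fun e he => hw₁ e (by simp [he])
    have hp₁le : Rval w₁' ≤ 1 := Rval_le_one hw₁'
    have hp₁pos : 0 < Rval w₁' := Rval_pos w₁'
    cases w₂ with
    | nil =>
      have h := (head_tail hw₁).2 (by simpa using hlt)
      simpa using h
    | cons d₂ w₂' =>
      have hd₂ : d₂ = 0 ∨ d₂ = 2 := hw₂ d₂ (by simp)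
      have hw₂' : ∀ e ∈ w₂', e = 0 ∨ e = 2 := fun e he => hw₂ e (by simp [he])
      have hp₂le : Rval w₂' ≤ 1 := Rval_le_one hw₂'
      have hp₂pos : 0 < Rval w₂' := Rval_pos w₂'
      rcases hd₁ with hd₁ | hd₁ <;> rcases hd₂ with hd₂ | hd₂ <;> subst hd₁ <;> subst hd₂
      · -- (0,0)
        have hval₁ : Rval (0 :: w₁') = Rval w₁' / 3 := by simp
        have hval₂ : Rval (0 :: w₂') = Rval w₂' / 3 := by simp
        have hlt' : Rval w₁' < Rval w₂' := by
          rw [hval₁, hval₂] at hlt; linarith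
        obtain ⟨a, l, ha, hg, hc⟩ := ih hw₁' hw₂' hlt'
        have ha1 : a ≤ 1 := (chain_start_mem01 hc).2
        obtain ⟨l', hl'⟩ := transport_left hc
        refine ⟨a/3, l', ?_, ?_, ?_⟩
        · rw [hval₁]; linarith
        · rw [hval₁]; exact gapt_left hp₁pos.le ha1 hg
        · exact ChainRel_congr hl' rfl hval₂.symm
      · -- (0,2)
        have hval₁ : Rval (0 :: w₁') = Rval w₁' / 3 := by simp
        have hval₂ : Rval (2 :: w₂') = (2 + Rval w₂') / 3 := by push_cast [Rval_cons]; ring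
        obtain ⟨lh, hlh⟩ := (head_tail hw₂').1
        obtain ⟨lh', hlh'⟩ := transport_right hlh
        have hH : ChainRel (2/3) lh' (Rval (2 :: w₂')) :=
          ChainRel_congr hlh' (by norm_num) (by rw [hval₂])
        by_cases hp1 : Rval w₁' = 1
        · refine ⟨2/3, lh', ?_, ?_, hH⟩
          · rw [hval₁, hp1]; norm_num
          · have : Rval (0 :: w₁') = (3⁻¹:ℝ) := by rw [hval₁, hp1]; norm_num
            rw [this]; exact gap_base
        · have hlt1 : Rval w₁' < 1 := lt_of_le_of_ne hp₁le hp1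
          obtain ⟨aa, ll, haa, hg, hc⟩ := (head_tail hw₁').2 hlt1
          have haa1 : aa ≤ 1 := (chain_start_mem01 hc).2
          obtain ⟨l₁, hl₁⟩ := transport_left hc
          have hl₁' : ChainRel (aa/3) l₁ (3⁻¹:ℝ) := ChainRel_congr hl₁ rfl (by norm_num)
          refine ⟨aa/3, l₁ ++ lh', ?_, ?_, ?_⟩
          · rw [hval₁]; linarith
          · rw [hval₁]; exact gapt_left hp₁pos.le haa1 hg
          · exact chain_append hl₁' (by norm_num) gap_base hH
      · -- (2,0) impossible
        exfalso
        have hval₁ : Rval (2 :: w₁') = (2 + Rval w₁') / 3 := by push_cast [Rval_cons]; ring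
        have hval₂ : Rval (0 :: w₂') = Rval w₂' / 3 := by simp
        rw [hval₁, hval₂] at hlt
        linarith
      · -- (2,2)
        have hval₁ : Rval (2 :: w₁') = (2 + Rval w₁') / 3 := by push_cast [Rval_cons]; ring
        have hval₂ : Rval (2 :: w₂') = (2 + Rval w₂') / 3 := by push_cast [Rval_cons]; ring
        have hlt' : Rval w₁' < Rval w₂' := by
          rw [hval₁, hval₂] at hlt; linarith
        obtain ⟨a, l, ha, hg, hc⟩ := ih hw₁' hw₂' hlt'
        have ha1 : a ≤ 1 := (chain_start_mem01 hc).2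
        obtain ⟨l', hl'⟩ := transport_right hc
        refine ⟨(2+a)/3, l', ?_, ?_, ?_⟩
        · rw [hval₁]; linarith
        · rw [hval₁]; exact gapt_right hp₁pos.le ha1 hg
        · exact ChainRel_congr hl' rfl hval₂.symm
lemma Rval_ofFn : ∀ (N : ℕ) (a : ℕ → ℕ),
    Rval (List.ofFn fun i : Fin N => a i) =
      (∑ i ∈ Finset.range N, (a i : ℝ)/3^(i+1)) + (1/3:ℝ)^N := by
  intro N
  induction N with
  | zero => intro a; simp
  | succ N ih =>
    intro a
    have e : (List.ofFn fun i : Fin (N+1) => a i) = a 0 :: (List.ofFn fun i : Fin N => a (i+1)) := by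
      rw [List.ofFn_succ]
      congr 1
    rw [e, Rval_cons, ih (fun i => a (i+1))]
    have e2 : ∑ i ∈ Finset.range N, (a (i+1):ℝ)/3^(i+1+1)
        = (∑ i ∈ Finset.range N, (a (i+1):ℝ)/3^(i+1))/3 := by
      rw [Finset.sum_div]
      apply Finset.sum_congr rfl
      intro i _
      rw [pow_succ]
      ring
    rw [Finset.sum_range_succ', e2, pow_succ]
    ring

lemma exists_word {p : ℝ} (hp : IsLeftEndpoint cantorC 1 p) :
    ∃ w : List ℕ, (∀ d ∈ w, d = 0 ∨ d = 2) ∧ p = Rval w := by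
  obtain ⟨hpC, hlt1, ε, hε, hgap⟩ := hp
  obtain ⟨a, ha, hpval⟩ := hpC
  have hN : ∃ N, ∀ n, N ≤ n → a n = 2 := by
    by_contra hcon
    push_neg at hcon
    obtain ⟨M, hM⟩ : ∃ M : ℕ, ((1:ℝ)/3)^M < ε/2 := by
      obtain ⟨M, hM⟩ := exists_pow_lt_of_lt_one (by positivity : (0:ℝ) < ε/2)
        (by norm_num : (1:ℝ)/3 < 1)
      exact ⟨M, hM⟩
    obtain ⟨n, hn, hne⟩ := hcon M
    have han : a n = 0 := by rcases ha n with h | h; exact h; exact absurd h hne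
    have hsmall : (2:ℝ)/3^(n+1) < ε := by
      have h1 : (2:ℝ)/3^(n+1) ≤ 2 * (1/3)^n := by
        rw [geom_aux]
        have : ((1:ℝ)/3)^n ≤ (1/3)^n := le_refl _
        nlinarith [pow_pos (by norm_num : (0:ℝ) < 1/3) n]
      have h2 : ((1:ℝ)/3)^n ≤ ((1:ℝ)/3)^M :=
        pow_le_pow_of_le_one (by norm_num) (by norm_num) hn
      linarith [pow_pos (by norm_num : (0:ℝ) < 1/3) n]
    set a' : ℕ → ℕ := Function.update a n 2 with ha'def
    have ha' : ∀ k, a' k = 0 ∨ a' k = 2 := by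
      intro k
      by_cases hk : k = n
      · subst hk; right; simp [ha'def]
      · rw [ha'def, Function.update_of_ne hk]; exact ha k
    have hfun : (fun k => (a' k : ℝ)/3^(k+1))
        = fun k => (a k : ℝ)/3^(k+1) + (if k = n then (2:ℝ)/3^(n+1) else 0) := by
      funext k
      by_cases hk : k = n
      · subst hk
        rw [ha'def, Function.update_self, han]
        simp
      · rw [ha'def, Function.update_of_ne hk, if_neg hk, add_zero]
    have hsing : Summable (fun k : ℕ => if k = n then (2:ℝ)/3^(n+1) else 0) := by
      apply summable_of_ne_finset_zero (s := {n})
      intro k hk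
      rw [if_neg (by simpa using hk)]
    have hval' : (∑' k, (a' k : ℝ)/3^(k+1)) = p + 2/3^(n+1) := by
      rw [hfun, Summable.tsum_add (digit_summable ha) hsing, tsum_ite_eq, hpval]
    have hmem : p + 2/3^(n+1) ∈ cantorC := ⟨a', ha', hval'.symm⟩
    have : p + 2/3^(n+1) ∈ Set.Ioo p (p + ε) := by
      constructor
      · have : (0:ℝ) < 2/3^(n+1) := by positivity
        linarith
      · linarith
    have : p + 2/3^(n+1) ∈ Set.Ioo p (p + ε) ∩ cantorC := ⟨this, hmem⟩
    rw [hgap] at this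
    exact this
  obtain ⟨N, h2⟩ := hN
  have htail : ∑' i : ℕ, ((a (i+N):ℝ)/3^(i+N+1)) = (1/3:ℝ)^N := by
    have e : (fun i : ℕ => ((a (i+N):ℝ)/3^(i+N+1))) = fun i => (1/3:ℝ)^N * (2/3^(i+1)) := by
      funext i
      rw [h2 (i+N) (by omega)]
      have hpw : (3:ℝ)^(i+N+1) = 3^(i+1) * 3^N := by
        rw [← pow_add]
        congr 1
        omega
      rw [hpw, one_div_pow]
      field_simp
      ring
    rw [e, tsum_mul_left, two_geom, mul_one]
  have hsum := Summable.sum_add_tsum_nat_add (f := fun n => (a n:ℝ)/3^(n+1)) N (digit_summable ha)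
  refine ⟨List.ofFn fun i : Fin N => a i, ?_, ?_⟩
  · intro d hd
    rw [List.mem_ofFn] at hd
    obtain ⟨i, rfl⟩ := hd
    exact ha i
  · rw [Rval_ofFn, ← htail, hsum, hpval]
lemma std {q₁ q₂ q₁' q₂' : ℝ} (h₁ : IsLeftEndpoint cantorC 1 q₁) (h₂ : IsLeftEndpoint cantorC 1 q₂)
    (h₁' : IsLeftEndpoint cantorC 1 q₁') (h₂' : IsLeftEndpoint cantorC 1 q₂')
    (h12 : q₁ < q₂) (h12' : q₁' < q₂') :
    ∃ g : ℝ → ℝ, Continuous g ∧ StrictMono g ∧ g 0 = 0 ∧ g 1 = 1 ∧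
      g '' cantorC = cantorC ∧ g q₁ = q₁' ∧ g q₂ = q₂' := by
  obtain ⟨w₁, hw₁, hq₁⟩ := exists_word h₁
  obtain ⟨w₂, hw₂, hq₂⟩ := exists_word h₂
  obtain ⟨w₁', hw₁', hq₁'⟩ := exists_word h₁'
  obtain ⟨w₂', hw₂', hq₂'⟩ := exists_word h₂'
  obtain ⟨lH, hH⟩ := (head_tail hw₁).1
  obtain ⟨lH', hH'⟩ := (head_tail hw₁').1
  rw [← hq₁] at hH
  rw [← hq₁'] at hH'
  obtain ⟨am, lM, hamlt, hamgap, hM⟩ := mid_chain hw₁ hw₂ (by rw [← hq₁, ← hq₂]; exact h12)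
  rw [← hq₁] at hamlt hamgap
  rw [← hq₂] at hM
  obtain ⟨am', lM', hamlt', hamgap', hM'⟩ := mid_chain hw₁' hw₂' (by rw [← hq₁', ← hq₂']; exact h12')
  rw [← hq₁'] at hamlt' hamgap'
  rw [← hq₂'] at hM'
  obtain ⟨av, lT, havlt, havgap, hT⟩ := (head_tail hw₂).2 (by rw [← hq₂]; exact h₂.2.1)
  rw [← hq₂] at havlt havgap
  obtain ⟨av', lT', havlt', havgap', hT'⟩ := (head_tail hw₂').2 (by rw [← hq₂']; exact h₂'.2.1)
  rw [← hq₂'] at havlt' havgap'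
  -- equalize lengths
  obtain ⟨lH₂, hlenH, hH₂⟩ := chain_extend hH (max lH.length lH'.length - lH.length)
  obtain ⟨lH₂', hlenH', hH₂'⟩ := chain_extend hH' (max lH.length lH'.length - lH'.length)
  obtain ⟨lM₂, hlenM, hM₂⟩ := chain_extend hM (max lM.length lM'.length - lM.length)
  obtain ⟨lM₂', hlenM', hM₂'⟩ := chain_extend hM' (max lM.length lM'.length - lM'.length)
  obtain ⟨lT₂, hlenT, hT₂⟩ := chain_extend hT (max lT.length lT'.length - lT.length)
  obtain ⟨lT₂', hlenT', hT₂'⟩ := chain_extend hT' (max lT.length lT'.length - lT'.length)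
  obtain ⟨fH, hfHc, hfHm, hfHs⟩ := chains_map hH₂ hH₂' (by
    have := Nat.le_max_left lH.length lH'.length
    have := Nat.le_max_right lH.length lH'.length
    omega)
  obtain ⟨fM, hfMc, hfMm, hfMs⟩ := chains_map hM₂ hM₂' (by
    have := Nat.le_max_left lM.length lM'.length
    have := Nat.le_max_right lM.length lM'.length
    omega)
  obtain ⟨fT, hfTc, hfTm, hfTs⟩ := chains_map hT₂ hT₂' (by
    have := Nat.le_max_left lT.length lT'.length
    have := Nat.le_max_right lT.length lT'.length
    omega)
  -- mid with leading gap
  obtain ⟨fg, hfgc, hfgm, hfgs⟩ := gap_seg h₁.1 (chain_mem hM₂).1 h₁'.1 (chain_mem hM₂').1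
    hamlt hamlt' hamgap hamgap'
  obtain ⟨FM, hFMc, hFMm, _, _, hFMs⟩ := glue_seg hfgc hfgm hfMc hfMm hamlt.le
    (chain_mem hM₂).2.2 hamlt'.le (chain_mem hM₂').2.2 hfgs hfMs
  -- tail with leading gap
  obtain ⟨fg₂, hfg₂c, hfg₂m, hfg₂s⟩ := gap_seg h₂.1 (chain_mem hT₂).1 h₂'.1 (chain_mem hT₂').1
    havlt havlt' havgap havgap'
  obtain ⟨FT, hFTc, hFTm, _, _, hFTs⟩ := glue_seg hfg₂c hfg₂m hfTc hfTm havlt.le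
    (chain_mem hT₂).2.2 havlt'.le (chain_mem hT₂').2.2 hfg₂s hfTs
  -- glue head and mid at q₁
  have hq₁0 : (0:ℝ) ≤ q₁ := (cantorC_subset_Icc h₁.1).1
  have hq₁0' : (0:ℝ) ≤ q₁' := (cantorC_subset_Icc h₁'.1).1
  obtain ⟨G₁, hG₁c, hG₁m, hG₁l, hG₁r, hG₁s⟩ := glue_seg hfHc hfHm hFMc hFMm hq₁0 h12.le
    hq₁0' h12'.le hfHs hFMs
  -- glue with tail at q₂
  have hq₂1 : q₂ ≤ 1 := h₂.2.1.le
  have hq₂1' : q₂' ≤ 1 := h₂'.2.1.le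
  have hq₂0 : (0:ℝ) ≤ q₂ := (cantorC_subset_Icc h₂.1).1
  have hq₂0' : (0:ℝ) ≤ q₂' := (cantorC_subset_Icc h₂'.1).1
  obtain ⟨G, hGc, hGm, hGl, hGr, hGs⟩ := glue_seg hG₁c hG₁m hFTc hFTm hq₂0 hq₂1
    hq₂0' hq₂1' hG₁s hFTs
  refine ⟨G, hGc, hGm, hGs.1, hGs.2.1, ?_, ?_, ?_⟩
  · have := hGs.2.2
    rwa [inter_eq_left.mpr cantorC_subset_Icc] at this
  · rw [hGl q₁ h12.le, hG₁l q₁ le_rfl, hfHs.2.1]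
  · rw [hGl q₂ le_rfl, hG₁r q₂ h12.le, hFMs.2.1]
lemma sm_image_Icc {f : ℝ → ℝ} (hc : Continuous f) (hm : StrictMono f) {a b : ℝ} (hab : a ≤ b) :
    f '' Icc a b = Icc (f a) (f b) := by
  apply Subset.antisymm
  · rintro _ ⟨x, hx, rfl⟩
    exact ⟨hm.le_iff_le.mpr hx.1, hm.le_iff_le.mpr hx.2⟩
  · exact intermediate_value_Icc hab hc.continuousOn

lemma LE_transport {u v p : ℝ} (huv : u < v)
    (hp : IsLeftEndpoint (affineIcc u v '' cantorC) v p) :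
    IsLeftEndpoint cantorC 1 ((p - u)/(v - u)) := by
  obtain ⟨hpm, hpv, ε, hε, hgap⟩ := hp
  have hvu : (0:ℝ) < v - u := by linarith
  refine ⟨?_, ?_, ε/(v-u), by positivity, ?_⟩
  · obtain ⟨t, ht, rfl⟩ := hpm
    have he : (u + (v - u) * t - u)/(v - u) = t := by field_simp; ring
    rw [show affineIcc u v t = u + (v - u) * t from rfl, he]
    exact ht
  · rw [div_lt_one hvu]
    linarith
  · ext x
    simp only [mem_inter_iff, mem_Ioo, mem_empty_iff_false, iff_false, not_and]
    rintro ⟨hx1, hx2⟩ hxC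
    have h1 : p - u < x * (v - u) := (div_lt_iff₀ hvu).mp hx1
    have hx2' : x < (p - u + ε)/(v - u) := by
      rw [add_div]
      exact hx2
    have h2 : x * (v - u) < p - u + ε := (lt_div_iff₀ hvu).mp hx2'
    have hy : affineIcc u v x ∈ Ioo p (p + ε) ∩ (affineIcc u v '' cantorC) := by
      refine ⟨⟨?_, ?_⟩, ⟨x, hxC, rfl⟩⟩
      · show p < u + (v - u) * x
        nlinarith
      · show u + (v - u) * x < p + ε
        nlinarith
    rw [hgap] at hy
    exact hy


/-- Given affine copies `C ⊆ [u,v]` and `C* ⊆ [u*,v*]` of the middle-thirds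
Cantor set and pairs of left endpoints `p₁ < p₂` in `C`, `p₁* < p₂*` in `C*`, there is an
increasing homeomorphism `f : [u,v] → [u*,v*]` with `f(C) = C*`, `f(p₁) = p₁*`,
`f(p₂) = p₂*`. -/
theorem stmt7 (u v u' v' : ℝ) (huv : u < v) (huv' : u' < v')
    (C C' : Set ℝ) (hC : C = affineIcc u v '' cantorC) (hC' : C' = affineIcc u' v' '' cantorC)
    (p₁ p₂ p₁' p₂' : ℝ) (h12 : p₁ < p₂) (h12' : p₁' < p₂')
    (hp₁ : IsLeftEndpoint C v p₁) (hp₂ : IsLeftEndpoint C v p₂)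
    (hp₁' : IsLeftEndpoint C' v' p₁') (hp₂' : IsLeftEndpoint C' v' p₂') :
    ∃ f : ℝ → ℝ, ContinuousOn f (Set.Icc u v) ∧ StrictMonoOn f (Set.Icc u v) ∧
      f '' Set.Icc u v = Set.Icc u' v' ∧ f '' C = C' ∧ f p₁ = p₁' ∧ f p₂ = p₂' := by
  subst hC hC'
  have hvu : (0:ℝ) < v - u := by linarith
  have hvu' : (0:ℝ) < v' - u' := by linarith
  have hq₁ := LE_transport huv hp₁
  have hq₂ := LE_transport huv hp₂
  have hq₁' := LE_transport huv' hp₁'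
  have hq₂' := LE_transport huv' hp₂'
  obtain ⟨g, hgc, hgm, hg0, hg1, hgC, hgq₁, hgq₂⟩ := std hq₁ hq₂ hq₁' hq₂'
    ((div_lt_div_iff_of_pos_right hvu).mpr (by linarith)) ((div_lt_div_iff_of_pos_right hvu').mpr (by linarith))
  set B : ℝ → ℝ := fun x => (x - u)/(v - u) with hBdef
  set A' : ℝ → ℝ := affineIcc u' v' with hA'def
  have hBc : Continuous B := (continuous_id.sub continuous_const).div_const _
  have hA'c : Continuous A' := by
    rw [hA'def]
    unfold affineIcc
    exact continuous_const.add (continuous_const.mul continuous_id)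
  have hBm : StrictMono B := fun x y hxy => (div_lt_div_iff_of_pos_right hvu).mpr (by linarith)
  have hA'm : StrictMono A' := fun x y hxy => by
    show u' + (v' - u') * x < u' + (v' - u') * y
    nlinarith
  refine ⟨A' ∘ g ∘ B, ?_, ?_, ?_, ?_, ?_, ?_⟩
  · exact ((hA'c.comp hgc).comp hBc).continuousOn
  · exact ((hA'm.comp hgm).comp hBm).strictMonoOn _
  · rw [sm_image_Icc (hA'c.comp (hgc.comp hBc)) (hA'm.comp (hgm.comp hBm)) huv.le]
    have hBu : B u = 0 := by rw [hBdef]; simp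
    have hBv : B v = 1 := by rw [hBdef]; simp [div_self hvu.ne']
    have e1 : (A' ∘ g ∘ B) u = u' := by
      simp only [Function.comp_apply, hBu, hg0]
      show u' + (v' - u') * 0 = u'
      ring
    have e2 : (A' ∘ g ∘ B) v = v' := by
      simp only [Function.comp_apply, hBv, hg1]
      show u' + (v' - u') * 1 = v'
      ring
    rw [e1, e2]
  · rw [image_comp, image_comp]
    have hBA : B '' (affineIcc u v '' cantorC) = cantorC := by
      rw [← image_comp]
      have : (B ∘ affineIcc u v) = id := by
        funext t
        show (u + (v - u) * t - u)/(v - u) = t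
        field_simp
        ring
      rw [this, image_id]
    rw [hBA, hgC]
  · show A' (g (B p₁)) = p₁'
    have : B p₁ = (p₁ - u)/(v - u) := rfl
    rw [this, hgq₁]
    show u' + (v' - u') * ((p₁' - u')/(v' - u')) = p₁'
    field_simp
    ring
  · show A' (g (B p₂)) = p₂'
    have : B p₂ = (p₂ - u)/(v - u) := rfl
    rw [this, hgq₂]
    show u' + (v' - u') * ((p₂' - u')/(v' - u')) = p₂'
    field_simp
    ring
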